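/- Let V = C v_0 \oplus C v_1 and fix B_0, B^1_{00}, B^1_{01}, B^1_{10}, B^1_{11}, \kappa_0 \in C with B^1_{00} = B^1_{11}. Define an action of the Borel subalgebra b_3 of the three-point Heisenberg algebra on V by: h_3^+ acts as 0, b_0 v_i = B_0 v_i, b^1_0 v_0 = B^1_{00} v_0 + B^1_{01} v_1, b^1_0 v_1 = B^1_{10} v_0 + B^1_{11} v_1, 1_0 v_i = \kappa_0 v_i, and 1_1 v_i = 0. Then this defines a representation of b_3 on V. -/
import Mathlib


/-- Basis index for the three-point Heisenberg algebra: `Sum.inl (false, m) ↔ b_m`,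
`Sum.inl (true, m) ↔ b¹_m`, `Sum.inr false ↔ 1₀`, `Sum.inr true ↔ 1₁`. -/
abbrev HeisIdx : Type := (Bool × ℤ) ⊕ Bool

/-- The underlying space of the three-point Heisenberg algebra. -/
abbrev HeisV : Type := HeisIdx →₀ ℂ

noncomputable def eH (p : HeisIdx) : HeisV := Finsupp.single p 1

/-- The odd double factorial `j‼` extended to negative odd integers by the
convention `(-2k-1)‼ = (-1)ᵏ/(2k-1)‼`. -/
noncomputable def oddDF (j : ℤ) : ℂ :=
  if -1 ≤ j then (Nat.doubleFactorial j.toNat : ℂ)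
  else (-1) ^ ((-j - 1) / 2).toNat / (Nat.doubleFactorial (-j - 2).toNat : ℂ)

/-- `1/j!`, extended by `0` for negative `j`. -/
noncomputable def invFact (j : ℤ) : ℂ :=
  if 0 ≤ j then ((j.toNat).factorial : ℂ)⁻¹ else 0

/-- `μ_{m,n} = m(-1)^{m+n+1} 2^{m+n} (2(m+n)-1)‼/(m+n+1)!`. -/
noncomputable def muH (m n : ℤ) : ℂ :=
  (m : ℂ) * (-1 : ℂ) ^ (m + n + 1) * (2 : ℂ) ^ (m + n) *
    oddDF (2 * (m + n) - 1) * invFact (m + n + 1)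

/-- The three-point Heisenberg bracket on basis elements. -/
noncomputable def brHBasis : HeisIdx → HeisIdx → HeisV
  | Sum.inl (false, m), Sum.inl (false, n) =>
      (if m + n = 0 then (-2 * (m : ℂ)) else 0) • eH (Sum.inr false)
  | Sum.inl (true, m), Sum.inl (true, n) =>
      (((n : ℂ) - m) *
        ((if m + n = -2 then 1 else 0) + (if m + n = -1 then 4 else 0))) •
          eH (Sum.inr false)
  | Sum.inl (true, m), Sum.inl (false, n) => (2 * muH m n) • eH (Sum.inr true)
  | Sum.inl (false, n), Sum.inl (true, m) => (-(2 * muH m n)) • eH (Sum.inr true)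
  | _, _ => 0

/-- The three-point Heisenberg bracket, extended bilinearly. -/
noncomputable def brH : HeisV →ₗ[ℂ] HeisV →ₗ[ℂ] HeisV :=
  Finsupp.lift (HeisV →ₗ[ℂ] HeisV) ℂ HeisIdx fun p =>
    Finsupp.lift HeisV ℂ HeisIdx fun q => brHBasis p q


/-- The Borel subspace `b₃ = h₃⁺ ⊕ h₃⁰`: the span of `b_n, b¹_n` for `n ≥ 0`
together with `1₀, 1₁`. -/
noncomputable def borelH : Submodule ℂ HeisV :=
  Submodule.span ℂ
    ((Set.range fun n : ℕ => eH (Sum.inl (false, (n : ℤ)))) ∪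
      (Set.range fun n : ℕ => eH (Sum.inl (true, (n : ℤ)))) ∪
        {eH (Sum.inr false), eH (Sum.inr true)})


/-- The action of the basis elements of the Heisenberg algebra on `V = ℂv₀ ⊕ ℂv₁`
(as 2×2 matrices): `h₃⁺` acts by `0`, `b₀` by `B₀`, `b¹₀` by the matrix with
`b¹₀v₀ = B₀₀v₀ + B₀₁v₁`, `b¹₀v₁ = B₁₀v₀ + B₁₁v₁`, `1₀` by `κ₀` and `1₁` by `0`. -/
noncomputable def rhoVBasis (B0 B00 B01 B10 B11 κ0 : ℂ) :
    HeisIdx → Matrix (Fin 2) (Fin 2) ℂ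
  | Sum.inl (false, m) => if m = 0 then B0 • 1 else 0
  | Sum.inl (true, m) => if m = 0 then !![B00, B10; B01, B11] else 0
  | Sum.inr false => κ0 • 1
  | Sum.inr true => 0

noncomputable def rhoV (B0 B00 B01 B10 B11 κ0 : ℂ) :
    HeisV →ₗ[ℂ] Matrix (Fin 2) (Fin 2) ℂ :=
  Finsupp.lift (Matrix (Fin 2) (Fin 2) ℂ) ℂ HeisIdx (rhoVBasis B0 B00 B01 B10 B11 κ0)


section aux

variable (B0 B00 B01 B10 B11 κ0 : ℂ)

lemma brH_eH (p q : HeisIdx) : brH (eH p) (eH q) = brHBasis p q := by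
  simp [brH, eH, Finsupp.lift_apply, Finsupp.sum_single_index]

lemma rhoV_eH (p : HeisIdx) :
    rhoV B0 B00 B01 B10 B11 κ0 (eH p) = rhoVBasis B0 B00 B01 B10 B11 κ0 p := by
  simp [rhoV, eH, Finsupp.lift_apply, Finsupp.sum_single_index]

lemma rhoV_eH_one : rhoV B0 B00 B01 B10 B11 κ0 (eH (Sum.inr true)) = 0 := by
  rw [rhoV_eH]; rfl

/-- The generating set of the Borel subalgebra. -/
def genS : Set HeisV :=
  ((Set.range fun n : ℕ => eH (Sum.inl (false, (n : ℤ)))) ∪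
      (Set.range fun n : ℕ => eH (Sum.inl (true, (n : ℤ)))) ∪
        {eH (Sum.inr false), eH (Sum.inr true)})

lemma core (p q : HeisV) (hp : p ∈ genS) (hq : q ∈ genS) :
    rhoV B0 B00 B01 B10 B11 κ0 (brH p q) =
      rhoV B0 B00 B01 B10 B11 κ0 p * rhoV B0 B00 B01 B10 B11 κ0 q -
        rhoV B0 B00 B01 B10 B11 κ0 q * rhoV B0 B00 B01 B10 B11 κ0 p := by
  obtain ((⟨m, rfl⟩ | ⟨m, rfl⟩) | hp2) := hp <;>
    (try rcases hp2 with rfl | rfl) <;>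
    obtain ((⟨n, rfl⟩ | ⟨n, rfl⟩) | hq2) := hq <;>
    (try rcases hq2 with rfl | rfl) <;>
    beta_reduce <;>
    rw [brH_eH] <;>
    simp only [brHBasis, map_smul, map_zero, rhoV_eH, rhoVBasis] <;>
    (try split_ifs) <;>
    first
      | (simp [smul_mul_assoc, mul_smul_comm, smul_smul, mul_comm]; done)
      | (exfalso; omega)
      | (have hm : m = 0 := by omega
         subst hm
         simp [smul_mul_assoc, mul_smul_comm, smul_smul, mul_comm]; done)

end aux

/-- with `B₀₀ = B₁₁`, the above assignment defines a representation
of the Borel subalgebra `b₃` on `V = ℂ²`. -/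
theorem borel_two_dim_rep (B0 B00 B01 B10 B11 κ0 : ℂ) (h : B00 = B11) :
    ∀ x ∈ borelH, ∀ y ∈ borelH,
      rhoV B0 B00 B01 B10 B11 κ0 (brH x y) =
        rhoV B0 B00 B01 B10 B11 κ0 x * rhoV B0 B00 B01 B10 B11 κ0 y -
          rhoV B0 B00 B01 B10 B11 κ0 y * rhoV B0 B00 B01 B10 B11 κ0 x := by
  intro x hx y hy
  set ρ := rhoV B0 B00 B01 B10 B11 κ0 with hρ
  induction hx using Submodule.span_induction with
  | mem x hxmem =>
    induction hy using Submodule.span_induction with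
    | mem y hymem => exact core B0 B00 B01 B10 B11 κ0 x y hxmem hymem
    | zero => simp
    | add y z hy hz ihy ihz =>
      simp only [map_add, LinearMap.add_apply, ihy, ihz, mul_add, add_mul]
      noncomm_ring
    | smul c y hy ih =>
      simp only [map_smul, LinearMap.smul_apply, ih, smul_sub, smul_mul_assoc,
        mul_smul_comm]
  | zero => simp
  | add x z hx2 hz ihx ihz =>
    simp only [map_add, LinearMap.add_apply, ihx, ihz, mul_add, add_mul]
    noncomm_ring
  | smul c x hx2 ih =>
    simp only [map_smul, LinearMap.smul_apply, ih, smul_sub, smul_mul_assoc,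
      mul_smul_comm]
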